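/- The functions T ↦ z_min(T) and T ↦ z_max(T) are continuous on (0,∞), as are the argmin and argmax functions T ↦ τ₁(T) and T ↦ τ₂(T). -/

import Mathlib

open Matrix Set Filter Topology

noncomputable def Acas (a₁ a₂ a₃ g₁ g₂ : ℝ) : Matrix (Fin 3) (Fin 3) ℝ :=
  !![-a₁, 0, 0; g₁, -a₂, 0; 0, g₂, -a₃]

def Bcas : Fin 3 → ℝ := ![1, 0, 0]

/-- impulse response g(t) = C e^{tA} B with C = (0,0,1) -/
noncomputable def impResp (a₁ a₂ a₃ g₁ g₂ : ℝ) (t : ℝ) : ℝ :=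
  ((NormedSpace.exp (t • Acas a₁ a₂ a₃ g₁ g₂)) *ᵥ Bcas) 2

/-- z(τ,T) = C e^{Aτ} (I - e^{AT})⁻¹ B -/
noncomputable def zfun (a₁ a₂ a₃ g₁ g₂ : ℝ) (τ T : ℝ) : ℝ :=
  ((NormedSpace.exp (τ • Acas a₁ a₂ a₃ g₁ g₂) *
    (1 - NormedSpace.exp (T • Acas a₁ a₂ a₃ g₁ g₂))⁻¹) *ᵥ Bcas) 2

noncomputable def zmaxF (a₁ a₂ a₃ g₁ g₂ T : ℝ) : ℝ :=
  sSup ((fun τ => zfun a₁ a₂ a₃ g₁ g₂ τ T) '' Set.Icc 0 T)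

noncomputable def zminF (a₁ a₂ a₃ g₁ g₂ T : ℝ) : ℝ :=
  sInf ((fun τ => zfun a₁ a₂ a₃ g₁ g₂ τ T) '' Set.Icc 0 T)

section Diag
variable (a₁ a₂ a₃ g₁ g₂ : ℝ)

noncomputable def dvec : Fin 3 → ℝ := ![-a₁, -a₂, -a₃]

noncomputable def Pm : Matrix (Fin 3) (Fin 3) ℝ :=
  !![1, 0, 0; g₁/(a₂-a₁), 1, 0; g₁*g₂/((a₂-a₁)*(a₃-a₁)), g₂/(a₃-a₂), 1]

lemma det_Pm : (Pm a₁ a₂ a₃ g₁ g₂).det = 1 := by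
  simp [Pm, Matrix.det_fin_three]

lemma isUnit_Pm : IsUnit (Pm a₁ a₂ a₃ g₁ g₂).det := by
  rw [det_Pm]; exact isUnit_one

lemma Acas_mul_Pm (h₁₂ : a₁ ≠ a₂) (h₁₃ : a₁ ≠ a₃) (h₂₃ : a₂ ≠ a₃) :  Acas a₁ a₂ a₃ g₁ g₂ * Pm a₁ a₂ a₃ g₁ g₂ =
    Pm a₁ a₂ a₃ g₁ g₂ * diagonal (dvec a₁ a₂ a₃) := by
  have h21 : a₂ - a₁ ≠ 0 := sub_ne_zero.2 (Ne.symm h₁₂)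
  have h31 : a₃ - a₁ ≠ 0 := sub_ne_zero.2 (Ne.symm h₁₃)
  have h32 : a₃ - a₂ ≠ 0 := sub_ne_zero.2 (Ne.symm h₂₃)
  ext i j
  fin_cases i <;> fin_cases j <;>
    simp [Acas, Pm, dvec, Matrix.mul_apply, Fin.sum_univ_three, Matrix.diagonal] <;>
    field_simp <;> ring

lemma Acas_eq (h₁₂ : a₁ ≠ a₂) (h₁₃ : a₁ ≠ a₃) (h₂₃ : a₂ ≠ a₃) : Acas a₁ a₂ a₃ g₁ g₂ =
    Pm a₁ a₂ a₃ g₁ g₂ * diagonal (dvec a₁ a₂ a₃) * (Pm a₁ a₂ a₃ g₁ g₂)⁻¹ := by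
  rw [← Acas_mul_Pm a₁ a₂ a₃ g₁ g₂ h₁₂ h₁₃ h₂₃,
    Matrix.mul_nonsing_inv_cancel_right _ _ (isUnit_Pm a₁ a₂ a₃ g₁ g₂)]

end Diag

section Exp
variable (a₁ a₂ a₃ g₁ g₂ : ℝ) (h₁₂ : a₁ ≠ a₂) (h₁₃ : a₁ ≠ a₃) (h₂₃ : a₂ ≠ a₃)

lemma exp_Acas (h₁₂ : a₁ ≠ a₂) (h₁₃ : a₁ ≠ a₃) (h₂₃ : a₂ ≠ a₃) (t : ℝ) :
    NormedSpace.exp (t • Acas a₁ a₂ a₃ g₁ g₂) =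
      Pm a₁ a₂ a₃ g₁ g₂ * diagonal (fun i => Real.exp (t * dvec a₁ a₂ a₃ i)) *
        (Pm a₁ a₂ a₃ g₁ g₂)⁻¹ := by
  have hP := isUnit_Pm a₁ a₂ a₃ g₁ g₂
  have hPu : IsUnit (Pm a₁ a₂ a₃ g₁ g₂) := (Matrix.isUnit_iff_isUnit_det _).2 hP
  have h1 : t • Acas a₁ a₂ a₃ g₁ g₂ =
      Pm a₁ a₂ a₃ g₁ g₂ * diagonal (fun i => t * dvec a₁ a₂ a₃ i) * (Pm a₁ a₂ a₃ g₁ g₂)⁻¹ := by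
    rw [Acas_eq a₁ a₂ a₃ g₁ g₂ h₁₂ h₁₃ h₂₃]
    have hd : diagonal (fun i => t * dvec a₁ a₂ a₃ i) = t • diagonal (dvec a₁ a₂ a₃) := by
      rw [← Matrix.diagonal_smul]
      congr 1
    rw [hd, Matrix.mul_smul, Matrix.smul_mul]
  rw [h1, Matrix.exp_conj _ _ hPu, Matrix.exp_diagonal, Pi.exp_def]
  congr 2
  ext i
  rw [← Real.exp_eq_exp_ℝ]

lemma inv_one_sub_exp (h₁₂ : a₁ ≠ a₂) (h₁₃ : a₁ ≠ a₃) (h₂₃ : a₂ ≠ a₃) (T : ℝ)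
    (hne : ∀ i, 1 - Real.exp (T * dvec a₁ a₂ a₃ i) ≠ 0) :
    (1 - NormedSpace.exp (T • Acas a₁ a₂ a₃ g₁ g₂))⁻¹ =
      Pm a₁ a₂ a₃ g₁ g₂ * diagonal (fun i => (1 - Real.exp (T * dvec a₁ a₂ a₃ i))⁻¹) *
        (Pm a₁ a₂ a₃ g₁ g₂)⁻¹ := by
  have hP := isUnit_Pm a₁ a₂ a₃ g₁ g₂
  have h1 : (1 : Matrix (Fin 3) (Fin 3) ℝ) - NormedSpace.exp (T • Acas a₁ a₂ a₃ g₁ g₂) =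
      Pm a₁ a₂ a₃ g₁ g₂ * diagonal (fun i => 1 - Real.exp (T * dvec a₁ a₂ a₃ i)) *
        (Pm a₁ a₂ a₃ g₁ g₂)⁻¹ := by
    rw [exp_Acas a₁ a₂ a₃ g₁ g₂ h₁₂ h₁₃ h₂₃]
    have hone : (1 : Matrix (Fin 3) (Fin 3) ℝ) =
        Pm a₁ a₂ a₃ g₁ g₂ * Matrix.diagonal (fun _ => (1:ℝ)) * (Pm a₁ a₂ a₃ g₁ g₂)⁻¹ := by
      rw [Matrix.diagonal_one, mul_one, Matrix.mul_nonsing_inv _ hP]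
    rw [hone, ← Matrix.sub_mul, ← Matrix.mul_sub, Matrix.diagonal_sub]
  have hdi : (diagonal (fun i => 1 - Real.exp (T * dvec a₁ a₂ a₃ i)))⁻¹ =
      diagonal (fun i => (1 - Real.exp (T * dvec a₁ a₂ a₃ i))⁻¹) := by
    apply Matrix.inv_eq_right_inv
    rw [Matrix.diagonal_mul_diagonal]
    rw [show (1 : Matrix (Fin 3) (Fin 3) ℝ) = Matrix.diagonal (fun _ => (1:ℝ)) by
      rw [Matrix.diagonal_one]]
    rw [show (fun i => (1 - Real.exp (T * dvec a₁ a₂ a₃ i)) *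
        (1 - Real.exp (T * dvec a₁ a₂ a₃ i))⁻¹) = fun _ => (1:ℝ) from
      funext fun i => mul_inv_cancel₀ (hne i)]
  rw [h1, Matrix.mul_inv_rev, Matrix.mul_inv_rev,
    Matrix.nonsing_inv_nonsing_inv _ hP, hdi, mul_assoc]

end Exp

section F
variable (a₁ a₂ a₃ g₁ g₂ : ℝ)

noncomputable def Ffun (p : ℝ × ℝ) : ℝ :=
  ∑ i : Fin 3, Pm a₁ a₂ a₃ g₁ g₂ 2 i *
    (Real.exp (p.1 * dvec a₁ a₂ a₃ i) * (1 - Real.exp (p.2 * dvec a₁ a₂ a₃ i))⁻¹) *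
    (Pm a₁ a₂ a₃ g₁ g₂)⁻¹ i 0

lemma dvec_neg (ha₁ : 0 < a₁) (ha₂ : 0 < a₂) (ha₃ : 0 < a₃) (i : Fin 3) :
    dvec a₁ a₂ a₃ i < 0 := by
  fin_cases i <;> simp [dvec] <;> linarith

lemma one_sub_exp_ne (ha₁ : 0 < a₁) (ha₂ : 0 < a₂) (ha₃ : 0 < a₃) {T : ℝ} (hT : 0 < T)
    (i : Fin 3) : 1 - Real.exp (T * dvec a₁ a₂ a₃ i) ≠ 0 := by
  have h1 : T * dvec a₁ a₂ a₃ i < 0 :=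
    mul_neg_of_pos_of_neg hT (dvec_neg a₁ a₂ a₃ ha₁ ha₂ ha₃ i)
  have := Real.exp_lt_one_iff.2 h1
  linarith

lemma zfun_eq (ha₁ : 0 < a₁) (ha₂ : 0 < a₂) (ha₃ : 0 < a₃)
    (h₁₂ : a₁ ≠ a₂) (h₁₃ : a₁ ≠ a₃) (h₂₃ : a₂ ≠ a₃) (τ T : ℝ) (hT : 0 < T) :
    zfun a₁ a₂ a₃ g₁ g₂ τ T = Ffun a₁ a₂ a₃ g₁ g₂ (τ, T) := by
  have hP := isUnit_Pm a₁ a₂ a₃ g₁ g₂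
  rw [zfun, exp_Acas a₁ a₂ a₃ g₁ g₂ h₁₂ h₁₃ h₂₃,
    inv_one_sub_exp a₁ a₂ a₃ g₁ g₂ h₁₂ h₁₃ h₂₃ T
      (one_sub_exp_ne a₁ a₂ a₃ ha₁ ha₂ ha₃ hT)]
  have hmid : Pm a₁ a₂ a₃ g₁ g₂ * diagonal (fun i => Real.exp (τ * dvec a₁ a₂ a₃ i)) *
      (Pm a₁ a₂ a₃ g₁ g₂)⁻¹ *
      (Pm a₁ a₂ a₃ g₁ g₂ * diagonal (fun i => (1 - Real.exp (T * dvec a₁ a₂ a₃ i))⁻¹) *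
      (Pm a₁ a₂ a₃ g₁ g₂)⁻¹) =
      Pm a₁ a₂ a₃ g₁ g₂ *
        diagonal (fun i => Real.exp (τ * dvec a₁ a₂ a₃ i) *
          (1 - Real.exp (T * dvec a₁ a₂ a₃ i))⁻¹) * (Pm a₁ a₂ a₃ g₁ g₂)⁻¹ := by
    rw [← Matrix.diagonal_mul_diagonal]
    calc Pm a₁ a₂ a₃ g₁ g₂ * diagonal (fun i => Real.exp (τ * dvec a₁ a₂ a₃ i)) *
        (Pm a₁ a₂ a₃ g₁ g₂)⁻¹ *
        (Pm a₁ a₂ a₃ g₁ g₂ * diagonal (fun i => (1 - Real.exp (T * dvec a₁ a₂ a₃ i))⁻¹) *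
        (Pm a₁ a₂ a₃ g₁ g₂)⁻¹)
        = Pm a₁ a₂ a₃ g₁ g₂ * diagonal (fun i => Real.exp (τ * dvec a₁ a₂ a₃ i)) *
          ((Pm a₁ a₂ a₃ g₁ g₂)⁻¹ * Pm a₁ a₂ a₃ g₁ g₂) *
          diagonal (fun i => (1 - Real.exp (T * dvec a₁ a₂ a₃ i))⁻¹) *
          (Pm a₁ a₂ a₃ g₁ g₂)⁻¹ := by
          simp only [mul_assoc]
      _ = _ := by rw [Matrix.nonsing_inv_mul _ hP, mul_one]; simp only [mul_assoc]
  rw [hmid, Ffun]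
  simp [Matrix.mulVec, dotProduct, Bcas, Matrix.mul_apply, Fin.sum_univ_three,
    Matrix.diagonal]

end F

lemma continuousOn_Ffun (a₁ a₂ a₃ g₁ g₂ : ℝ) (ha₁ : 0 < a₁) (ha₂ : 0 < a₂) (ha₃ : 0 < a₃) :
    ContinuousOn (Ffun a₁ a₂ a₃ g₁ g₂) {p : ℝ × ℝ | 0 < p.2} := by
  apply continuousOn_finset_sum
  intro i _
  apply ContinuousOn.mul _ continuousOn_const
  apply ContinuousOn.mul continuousOn_const
  apply ContinuousOn.mul
  · exact (Real.continuous_exp.comp (continuous_fst.mul continuous_const)).continuousOn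
  · apply ContinuousOn.inv₀
    · exact (continuous_const.sub
        (Real.continuous_exp.comp (continuous_snd.mul continuous_const))).continuousOn
    · intro p hp
      exact one_sub_exp_ne a₁ a₂ a₃ ha₁ ha₂ ha₃ hp i

/-- Berge-style continuity of a unique maximiser. -/
lemma berge_max {F : ℝ × ℝ → ℝ} {T₀ : ℝ} (hT₀ : 0 < T₀)
    (hF : ContinuousOn F {p : ℝ × ℝ | 0 < p.2})
    {σ : ℝ → ℝ}
    (hmem : ∀ T, 0 < T → σ T ∈ Set.Icc (0:ℝ) 1)
    (hmax : ∀ T, 0 < T → ∀ s ∈ Set.Icc (0:ℝ) 1, F (s, T) ≤ F (σ T, T))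
    (huniq : ∀ c ∈ Set.Icc (0:ℝ) 1,
      (∀ s ∈ Set.Icc (0:ℝ) 1, F (s, T₀) ≤ F (c, T₀)) → c = σ T₀) :
    ContinuousWithinAt σ (Set.Ioi 0) T₀ := by
  have hopen : IsOpen {p : ℝ × ℝ | 0 < p.2} := isOpen_lt continuous_const continuous_snd
  have hFat : ∀ q : ℝ × ℝ, 0 < q.2 → ContinuousAt F q := fun q hq =>
    (hF.continuousAt (hopen.mem_nhds hq))
  by_contra hcont
  rw [ContinuousWithinAt, Metric.tendsto_nhds] at hcont
  push_neg at hcont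
  obtain ⟨ε, hε, hfreq⟩ := hcont
  replace hfreq : ∃ᶠ T in 𝓝[Set.Ioi (0:ℝ)] T₀, ¬ dist (σ T) (σ T₀) < ε :=
    hfreq.mono fun T hT => not_lt.2 hT
  set l := 𝓝[Set.Ioi (0:ℝ)] T₀ ⊓ 𝓟 {T | ¬ dist (σ T) (σ T₀) < ε} with hl
  haveI hlne : l.NeBot := Filter.frequently_iff_neBot.1 hfreq
  have hlIoi : l ≤ 𝓟 (Set.Ioi (0:ℝ)) := le_trans inf_le_left inf_le_right
  -- σ maps l into the compact set K
  set K : Set ℝ := Set.Icc 0 1 ∩ {x | ε ≤ dist x (σ T₀)} with hK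
  have hKcomp : IsCompact K :=
    isCompact_Icc.inter_right (isClosed_le continuous_const (continuous_id.dist continuous_const))
  have hmapsK : Filter.map σ l ≤ 𝓟 K := by
    rw [Filter.le_principal_iff, Filter.mem_map]
    have h1 : {T : ℝ | σ T ∈ Set.Icc (0:ℝ) 1} ∈ l :=
      Filter.mem_of_superset (hlIoi (Filter.mem_principal_self _)) fun T hT => hmem T hT
    have h2 : {T : ℝ | ε ≤ dist (σ T) (σ T₀)} ∈ l := by
      have : {T : ℝ | ¬ dist (σ T) (σ T₀) < ε} ∈ l :=
        (inf_le_right : l ≤ 𝓟 _) (Filter.mem_principal_self _)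
      exact Filter.mem_of_superset this fun T hT => not_lt.1 hT
    filter_upwards [h1, h2] with T hT1 hT2
    exact ⟨hT1, hT2⟩
  obtain ⟨c, hcK, hclust⟩ := hKcomp.exists_mapClusterPt (u := σ) hmapsK
  -- pass to the finer filter where σ converges to c
  set l' := l ⊓ Filter.comap σ (𝓝 c) with hl'
  haveI hl'ne : l'.NeBot := by
    rw [MapClusterPt, ClusterPt] at hclust
    rw [Filter.neBot_iff]
    intro h0
    have : Filter.map σ l' = Filter.map σ l ⊓ 𝓝 c := Filter.push_pull σ l (𝓝 c)
    rw [hl'] at this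
    apply hclust.ne
    rw [inf_comm, ← this, show l ⊓ comap σ (𝓝 c) = ⊥ from hl' ▸ h0, Filter.map_bot]
  have hσc : Filter.Tendsto σ l' (𝓝 c) := tendsto_comap.mono_left inf_le_right
  have hl'w : l' ≤ 𝓝[Set.Ioi 0] T₀ := le_trans inf_le_left inf_le_left
  have hTl : Filter.Tendsto (fun T : ℝ => T) l' (𝓝 T₀) :=
    (tendsto_id (α := ℝ)).mono_left (le_trans hl'w nhdsWithin_le_nhds)
  have hl'Ioi : ∀ᶠ T in l', (0:ℝ) < T :=
    le_trans inf_le_left hlIoi (Filter.mem_principal_self _)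
  -- F (σ T, T) → F (c, T₀)
  have hcT₀ : (0:ℝ) < (c, T₀).2 := hT₀
  have hpair : Filter.Tendsto (fun T : ℝ => (σ T, T)) l' (𝓝 (c, T₀)) :=
    hσc.prodMk_nhds hTl
  have htop : Filter.Tendsto (fun T : ℝ => F (σ T, T)) l' (𝓝 (F (c, T₀))) :=
    ((hFat _ hcT₀).tendsto.comp hpair)
  -- c is a maximiser at T₀
  have hcmax : ∀ s ∈ Set.Icc (0:ℝ) 1, F (s, T₀) ≤ F (c, T₀) := by
    intro s hs
    have hfix : Filter.Tendsto (fun T : ℝ => F (s, T)) l' (𝓝 (F (s, T₀))) := by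
      have : Filter.Tendsto (fun T : ℝ => ((s : ℝ), T)) l' (𝓝 (s, T₀)) :=
        tendsto_const_nhds.prodMk_nhds hTl
      exact (hFat (s, T₀) hT₀).tendsto.comp this
    refine le_of_tendsto_of_tendsto hfix htop ?_
    filter_upwards [hl'Ioi] with T hT
    exact hmax T hT s hs
  have hceq : c = σ T₀ := huniq c hcK.1 hcmax
  have : ε ≤ dist c (σ T₀) := hcK.2
  rw [hceq, dist_self] at this
  linarith

theorem zmin_zmax_continuous (a₁ a₂ a₃ g₁ g₂ : ℝ)
    (ha₁ : 0 < a₁) (ha₂ : 0 < a₂) (ha₃ : 0 < a₃)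
    (h₁₂ : a₁ ≠ a₂) (h₁₃ : a₁ ≠ a₃) (h₂₃ : a₂ ≠ a₃)
    (hg₁ : 0 < g₁) (hg₂ : 0 < g₂)
    (τ₁ τ₂ : ℝ → ℝ)
    (hτ₁ : ∀ T : ℝ, 0 < T → τ₁ T ∈ Set.Ioo 0 T ∧
      IsMinOn (fun τ => zfun a₁ a₂ a₃ g₁ g₂ τ T) (Set.Icc 0 T) (τ₁ T) ∧
      ∀ σ ∈ Set.Icc (0:ℝ) T,
        IsMinOn (fun τ => zfun a₁ a₂ a₃ g₁ g₂ τ T) (Set.Icc 0 T) σ → σ = τ₁ T)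
    (hτ₂ : ∀ T : ℝ, 0 < T → τ₂ T ∈ Set.Ioo 0 T ∧
      IsMaxOn (fun τ => zfun a₁ a₂ a₃ g₁ g₂ τ T) (Set.Icc 0 T) (τ₂ T) ∧
      ∀ σ ∈ Set.Icc (0:ℝ) T,
        IsMaxOn (fun τ => zfun a₁ a₂ a₃ g₁ g₂ τ T) (Set.Icc 0 T) σ → σ = τ₂ T) :
    ContinuousOn (zminF a₁ a₂ a₃ g₁ g₂) (Set.Ioi 0) ∧
    ContinuousOn (zmaxF a₁ a₂ a₃ g₁ g₂) (Set.Ioi 0) ∧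
    ContinuousOn τ₁ (Set.Ioi 0) ∧
    ContinuousOn τ₂ (Set.Ioi 0) := by
  set F := Ffun a₁ a₂ a₃ g₁ g₂ with hFdef
  have hFS : ContinuousOn F {p : ℝ × ℝ | 0 < p.2} :=
    continuousOn_Ffun a₁ a₂ a₃ g₁ g₂ ha₁ ha₂ ha₃
  have hz : ∀ τ T : ℝ, 0 < T → zfun a₁ a₂ a₃ g₁ g₂ τ T = F (τ, T) :=
    fun τ T hT => zfun_eq a₁ a₂ a₃ g₁ g₂ ha₁ ha₂ ha₃ h₁₂ h₁₃ h₂₃ τ T hT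
  set G : ℝ × ℝ → ℝ := fun p => F (p.1 * p.2, p.2) with hGdef
  have hGS : ContinuousOn G {p : ℝ × ℝ | 0 < p.2} := by
    exact hFS.comp ((continuous_fst.mul continuous_snd).prodMk continuous_snd).continuousOn
      (fun p hp => hp)
  -- basic transfers
  have hGz : ∀ s T : ℝ, 0 < T → G (s, T) = zfun a₁ a₂ a₃ g₁ g₂ (s * T) T :=
    fun s T hT => (hz (s * T) T hT).symm
  have hGz' : ∀ T : ℝ, 0 < T → ∀ x : ℝ, G (x / T, T) = zfun a₁ a₂ a₃ g₁ g₂ x T := by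
    intro T hT x
    rw [hGz _ _ hT, div_mul_cancel₀ _ hT.ne']
  have hsT : ∀ T : ℝ, 0 < T → ∀ s ∈ Set.Icc (0:ℝ) 1, s * T ∈ Set.Icc (0:ℝ) T := by
    intro T hT s hs
    exact ⟨mul_nonneg hs.1 hT.le, by nlinarith [hs.2]⟩
  have hdivmem : ∀ T : ℝ, 0 < T → ∀ x ∈ Set.Icc (0:ℝ) T, x / T ∈ Set.Icc (0:ℝ) 1 :=
    fun T hT x hx => ⟨div_nonneg hx.1 hT.le, (div_le_one hT).2 hx.2⟩
  -- max part data
  have hmem₂ : ∀ T : ℝ, 0 < T → τ₂ T / T ∈ Set.Icc (0:ℝ) 1 :=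
    fun T hT => hdivmem T hT _ (Set.mem_Icc_of_Ioo (hτ₂ T hT).1)
  have hmax₂ : ∀ T : ℝ, 0 < T → ∀ s ∈ Set.Icc (0:ℝ) 1, G (s, T) ≤ G (τ₂ T / T, T) := by
    intro T hT s hs
    rw [hGz _ _ hT, hGz' T hT]
    exact isMaxOn_iff.1 (hτ₂ T hT).2.1 _ (hsT T hT s hs)
  have huniq₂ : ∀ T₀ : ℝ, 0 < T₀ → ∀ c ∈ Set.Icc (0:ℝ) 1,
      (∀ s ∈ Set.Icc (0:ℝ) 1, G (s, T₀) ≤ G (c, T₀)) → c = τ₂ T₀ / T₀ := by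
    intro T₀ hT₀ c hc hcm
    obtain ⟨hIoo, hMax, hU⟩ := hτ₂ T₀ hT₀
    have hcT : c * T₀ ∈ Set.Icc (0:ℝ) T₀ := hsT T₀ hT₀ c hc
    have hmax' : IsMaxOn (fun τ => zfun a₁ a₂ a₃ g₁ g₂ τ T₀) (Set.Icc 0 T₀) (c * T₀) := by
      rw [isMaxOn_iff]
      intro τ hτ
      have := hcm _ (hdivmem T₀ hT₀ τ hτ)
      rwa [hGz' T₀ hT₀, hGz _ _ hT₀] at this
    have h := hU _ hcT hmax'
    field_simp [hT₀.ne'] at h ⊢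
    linarith
  have hσ₂cont : ContinuousOn (fun T => τ₂ T / T) (Set.Ioi 0) := by
    intro T₀ hT₀
    exact berge_max hT₀ hGS (fun T hT => hmem₂ T hT) (fun T hT => hmax₂ T hT)
      (huniq₂ T₀ hT₀)
  have hτ₂cont : ContinuousOn τ₂ (Set.Ioi 0) :=
    (hσ₂cont.mul continuousOn_id).congr
      (fun T hT => (div_mul_cancel₀ (τ₂ T) (ne_of_gt hT)).symm)
  -- min part data
  have hmem₁ : ∀ T : ℝ, 0 < T → τ₁ T / T ∈ Set.Icc (0:ℝ) 1 :=
    fun T hT => hdivmem T hT _ (Set.mem_Icc_of_Ioo (hτ₁ T hT).1)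
  have hmax₁ : ∀ T : ℝ, 0 < T → ∀ s ∈ Set.Icc (0:ℝ) 1, -G (s, T) ≤ -G (τ₁ T / T, T) := by
    intro T hT s hs
    rw [hGz _ _ hT, hGz' T hT]
    exact neg_le_neg (isMinOn_iff.1 (hτ₁ T hT).2.1 _ (hsT T hT s hs))
  have huniq₁ : ∀ T₀ : ℝ, 0 < T₀ → ∀ c ∈ Set.Icc (0:ℝ) 1,
      (∀ s ∈ Set.Icc (0:ℝ) 1, -G (s, T₀) ≤ -G (c, T₀)) → c = τ₁ T₀ / T₀ := by
    intro T₀ hT₀ c hc hcm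
    obtain ⟨hIoo, hMin, hU⟩ := hτ₁ T₀ hT₀
    have hcT : c * T₀ ∈ Set.Icc (0:ℝ) T₀ := hsT T₀ hT₀ c hc
    have hmin' : IsMinOn (fun τ => zfun a₁ a₂ a₃ g₁ g₂ τ T₀) (Set.Icc 0 T₀) (c * T₀) := by
      rw [isMinOn_iff]
      intro τ hτ
      have := hcm _ (hdivmem T₀ hT₀ τ hτ)
      rw [hGz' T₀ hT₀, hGz _ _ hT₀] at this
      linarith
    have h := hU _ hcT hmin'
    field_simp [hT₀.ne'] at h ⊢
    linarith
  have hσ₁cont : ContinuousOn (fun T => τ₁ T / T) (Set.Ioi 0) := by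
    intro T₀ hT₀
    exact berge_max hT₀ hGS.neg (fun T hT => hmem₁ T hT) (fun T hT => hmax₁ T hT)
      (huniq₁ T₀ hT₀)
  have hτ₁cont : ContinuousOn τ₁ (Set.Ioi 0) :=
    (hσ₁cont.mul continuousOn_id).congr
      (fun T hT => (div_mul_cancel₀ (τ₁ T) (ne_of_gt hT)).symm)
  -- value functions
  have hzmax : ∀ T ∈ Set.Ioi (0:ℝ), zmaxF a₁ a₂ a₃ g₁ g₂ T = F (τ₂ T, T) := by
    intro T hT
    obtain ⟨hIoo, hMax, -⟩ := hτ₂ T hT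
    have hgr : IsGreatest ((fun τ => zfun a₁ a₂ a₃ g₁ g₂ τ T) '' Set.Icc 0 T)
        (zfun a₁ a₂ a₃ g₁ g₂ (τ₂ T) T) :=
      ⟨Set.mem_image_of_mem _ (Set.mem_Icc_of_Ioo hIoo), fun y hy => by
        obtain ⟨τ, hτ, rfl⟩ := hy
        exact isMaxOn_iff.1 hMax _ hτ⟩
    rw [zmaxF, hgr.csSup_eq, hz _ _ hT]
  have hzmin : ∀ T ∈ Set.Ioi (0:ℝ), zminF a₁ a₂ a₃ g₁ g₂ T = F (τ₁ T, T) := by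
    intro T hT
    obtain ⟨hIoo, hMin, -⟩ := hτ₁ T hT
    have hls : IsLeast ((fun τ => zfun a₁ a₂ a₃ g₁ g₂ τ T) '' Set.Icc 0 T)
        (zfun a₁ a₂ a₃ g₁ g₂ (τ₁ T) T) :=
      ⟨Set.mem_image_of_mem _ (Set.mem_Icc_of_Ioo hIoo), fun y hy => by
        obtain ⟨τ, hτ, rfl⟩ := hy
        exact isMinOn_iff.1 hMin _ hτ⟩
    rw [zminF, hls.csInf_eq, hz _ _ hT]
  have hcmax : ContinuousOn (fun T => F (τ₂ T, T)) (Set.Ioi 0) :=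
    hFS.comp (hτ₂cont.prodMk continuousOn_id) (fun T hT => hT)
  have hcmin : ContinuousOn (fun T => F (τ₁ T, T)) (Set.Ioi 0) :=
    hFS.comp (hτ₁cont.prodMk continuousOn_id) (fun T hT => hT)
  exact ⟨hcmin.congr hzmin, hcmax.congr hzmax, hτ₁cont, hτ₂cont⟩
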